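/- Let p, q, u, v be pairwise coprime positive integers, N = pquv, r₁ = pu, s₁ = qv, r₂ = pv, s₂ = qu, and let σ_{1/r₁}, σ_{1/r₂} ∈ SL₂(ℝ) be the Atkin–Lehner scaling matrices of 1/r₁ and 1/r₂. Let c be a positive integer with pq ∣ c and gcd(c, uv) = 1, and set γ₀ = c·√(uv). Then the set of elements M of σ_{1/r₁}⁻¹ · Γ₀(N) · σ_{1/r₂} with lower-left entry M₂₁ = γ₀, upper-left entry M₁₁ ∈ [0, γ₀), and lower-right entry M₂₂ ∈ [0, γ₀) is exactly the set of matrices [[x√(uv), (xwuv − 1)/(c√(uv))], [c√(uv), w√(uv)]] where x, w are integers with 0 ≤ x < c, 0 ≤ w < c and x·w·uv ≡ 1 (mod c). Moreover, every element M' of σ_{1/r₁}⁻¹ · Γ₀(N) · σ_{1/r₂} with lower-left entry γ₀ can be written uniquely as [[1, j],[0, 1]]⁻¹ · M · [[1, k],[0, 1]]⁻¹ with M in this set and j, k ∈ ℤ. -/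

import Mathlib

open Matrix



private lemma map_fin_two' (f : ℤ → ℝ) (a b c d : ℤ) :
    (!![a, b; c, d]).map f = !![f a, f b; f c, f d] := by
  ext i j; fin_cases i <;> fin_cases j <;> simp

private lemma fin_two_ext' {α : Type*} {a b c d a' b' c' d' : α}
    (h00 : a = a') (h01 : b = b') (h10 : c = c') (h11 : d = d') :
    !![a, b; c, d] = !![a', b'; c', d'] := by rw [h00, h01, h10, h11]

private lemma conj_aux (p q u v : ℤ) (hq : 0 < q) (hu : 0 < u) (hv : 0 < v)
    (sbar₁ sbar₂ b₁ b₂ : ℤ)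
    (h₁ : sbar₁ * (q * v) - 1 = (p * u) * b₁)
    (h₂ : sbar₂ * (q * u) - 1 = (p * v) * b₂)
    (σ₁ σ₂ : Matrix (Fin 2) (Fin 2) ℝ)
    (hσ₁ : σ₁ = !![(1 : ℝ), (b₁ : ℝ); ((p * u : ℤ) : ℝ), ((sbar₁ * (q * v) : ℤ) : ℝ)] *
      !![Real.sqrt ((q * v : ℤ) : ℝ), 0; 0, (Real.sqrt ((q * v : ℤ) : ℝ))⁻¹])
    (hσ₂ : σ₂ = !![(1 : ℝ), (b₂ : ℝ); ((p * v : ℤ) : ℝ), ((sbar₂ * (q * u) : ℤ) : ℝ)] *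
      !![Real.sqrt ((q * u : ℤ) : ℝ), 0; 0, (Real.sqrt ((q * u : ℤ) : ℝ))⁻¹])
    (H : Matrix (Fin 2) (Fin 2) ℤ) :
    σ₁⁻¹ * ((!![1, b₁; p*u, sbar₁*(q*v)] * H * !![sbar₂*(q*u), -b₂; -(p*v), 1]).map
        (Int.cast : ℤ → ℝ)) * σ₂ =
      !![(H 0 0 : ℝ) * Real.sqrt ((q * u : ℤ) : ℝ) / Real.sqrt ((q * v : ℤ) : ℝ),
         (H 0 1 : ℝ) / (Real.sqrt ((q * v : ℤ) : ℝ) * Real.sqrt ((q * u : ℤ) : ℝ));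
         (H 1 0 : ℝ) * (Real.sqrt ((q * v : ℤ) : ℝ) * Real.sqrt ((q * u : ℤ) : ℝ)),
         (H 1 1 : ℝ) * Real.sqrt ((q * v : ℤ) : ℝ) / Real.sqrt ((q * u : ℤ) : ℝ)] := by
  set s₁ := Real.sqrt ((q * v : ℤ) : ℝ) with hs₁
  set s₂ := Real.sqrt ((q * u : ℤ) : ℝ) with hs₂
  have hs₁ne : s₁ ≠ 0 := ne_of_gt (Real.sqrt_pos.2 (by push_cast; positivity))
  have hs₂ne : s₂ ≠ 0 := ne_of_gt (Real.sqrt_pos.2 (by push_cast; positivity))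
  have hd₁ : (sbar₁ : ℝ) * ((q:ℝ) * (v:ℝ)) - (p:ℝ) * (u:ℝ) * (b₁:ℝ) = 1 := by
    have h : ((sbar₁ * (q * v) - 1 : ℤ) : ℝ) = (((p * u) * b₁ : ℤ) : ℝ) := by
      exact_mod_cast congrArg (Int.cast : ℤ → ℝ) h₁
    push_cast at h; linear_combination h
  have hd₂ : (sbar₂ : ℝ) * ((q:ℝ) * (u:ℝ)) - (p:ℝ) * (v:ℝ) * (b₂:ℝ) = 1 := by
    have h : ((sbar₂ * (q * u) - 1 : ℤ) : ℝ) = (((p * v) * b₂ : ℤ) : ℝ) := by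
      exact_mod_cast congrArg (Int.cast : ℤ → ℝ) h₂
    push_cast at h; linear_combination h
  have hinv : σ₁⁻¹ = !![((sbar₁*(q*v) : ℤ) : ℝ) / s₁, -(b₁ : ℝ) / s₁;
      -((p*u : ℤ) : ℝ) * s₁, s₁] := by
    apply Matrix.inv_eq_left_inv
    rw [hσ₁, Matrix.mul_fin_two, Matrix.mul_fin_two, Matrix.one_fin_two]
    refine fin_two_ext' ?_ ?_ ?_ ?_
    · push_cast; field_simp; try first | ring1 | linear_combination hd₁ | linear_combination s₁*hd₁ | linear_combination (s₁-1)*hd₁ | linear_combination (1-s₁)*hd₁ | linear_combination hd₂ | linear_combination s₂*hd₂ | linear_combination (s₂-1)*hd₂ | linear_combination (1-s₂)*hd₂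
    · push_cast; field_simp; try first | ring1 | linear_combination hd₁ | linear_combination s₁*hd₁ | linear_combination (s₁-1)*hd₁ | linear_combination (1-s₁)*hd₁ | linear_combination hd₂ | linear_combination s₂*hd₂ | linear_combination (s₂-1)*hd₂ | linear_combination (1-s₂)*hd₂
    · push_cast; field_simp; try first | ring1 | linear_combination hd₁ | linear_combination s₁*hd₁ | linear_combination (s₁-1)*hd₁ | linear_combination (1-s₁)*hd₁ | linear_combination hd₂ | linear_combination s₂*hd₂ | linear_combination (s₂-1)*hd₂ | linear_combination (1-s₂)*hd₂
    · push_cast; field_simp; try first | ring1 | linear_combination hd₁ | linear_combination s₁*hd₁ | linear_combination (s₁-1)*hd₁ | linear_combination (1-s₁)*hd₁ | linear_combination hd₂ | linear_combination s₂*hd₂ | linear_combination (s₂-1)*hd₂ | linear_combination (1-s₂)*hd₂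
  have hcastfun : (Int.cast : ℤ → ℝ) = ⇑(Int.castRingHom ℝ) := rfl
  rw [hcastfun, Matrix.map_mul, Matrix.map_mul]
  have e1 : σ₁⁻¹ * (!![1, b₁; p*u, sbar₁*(q*v)]).map ⇑(Int.castRingHom ℝ) =
      !![s₁⁻¹, 0; 0, s₁] := by
    rw [hinv, show (!![1, b₁; p*u, sbar₁*(q*v)]).map ⇑(Int.castRingHom ℝ) =
        !![(1:ℝ), (b₁:ℝ); ((p*u : ℤ):ℝ), ((sbar₁*(q*v) : ℤ):ℝ)] from by
          rw [show ⇑(Int.castRingHom ℝ) = (Int.cast : ℤ → ℝ) from rfl, map_fin_two']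
          push_cast; norm_num,
      Matrix.mul_fin_two]
    refine fin_two_ext' ?_ ?_ ?_ ?_
    · push_cast; field_simp; try first | ring1 | linear_combination hd₁ | linear_combination s₁*hd₁ | linear_combination (s₁-1)*hd₁ | linear_combination (1-s₁)*hd₁ | linear_combination hd₂ | linear_combination s₂*hd₂ | linear_combination (s₂-1)*hd₂ | linear_combination (1-s₂)*hd₂
    · push_cast; field_simp; try first | ring1 | linear_combination hd₁ | linear_combination s₁*hd₁ | linear_combination (s₁-1)*hd₁ | linear_combination (1-s₁)*hd₁ | linear_combination hd₂ | linear_combination s₂*hd₂ | linear_combination (s₂-1)*hd₂ | linear_combination (1-s₂)*hd₂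
    · push_cast; field_simp; try first | ring1 | linear_combination hd₁ | linear_combination s₁*hd₁ | linear_combination (s₁-1)*hd₁ | linear_combination (1-s₁)*hd₁ | linear_combination hd₂ | linear_combination s₂*hd₂ | linear_combination (s₂-1)*hd₂ | linear_combination (1-s₂)*hd₂
    · push_cast; field_simp; try first | ring1 | linear_combination hd₁ | linear_combination s₁*hd₁ | linear_combination (s₁-1)*hd₁ | linear_combination (1-s₁)*hd₁ | linear_combination hd₂ | linear_combination s₂*hd₂ | linear_combination (s₂-1)*hd₂ | linear_combination (1-s₂)*hd₂
  have e2 : (!![sbar₂*(q*u), -b₂; -(p*v), 1]).map ⇑(Int.castRingHom ℝ) * σ₂ =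
      !![s₂, 0; 0, s₂⁻¹] := by
    rw [hσ₂, ← mul_assoc, show (!![sbar₂*(q*u), -b₂; -(p*v), 1]).map ⇑(Int.castRingHom ℝ) =
        !![((sbar₂*(q*u) : ℤ):ℝ), -(b₂:ℝ); -((p*v : ℤ):ℝ), (1:ℝ)] from by
          rw [show ⇑(Int.castRingHom ℝ) = (Int.cast : ℤ → ℝ) from rfl, map_fin_two']
          push_cast; norm_num,
      Matrix.mul_fin_two, Matrix.mul_fin_two]
    refine fin_two_ext' ?_ ?_ ?_ ?_
    · push_cast; field_simp; try first | ring1 | linear_combination hd₁ | linear_combination s₁*hd₁ | linear_combination (s₁-1)*hd₁ | linear_combination (1-s₁)*hd₁ | linear_combination hd₂ | linear_combination s₂*hd₂ | linear_combination (s₂-1)*hd₂ | linear_combination (1-s₂)*hd₂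
    · push_cast; field_simp; try first | ring1 | linear_combination hd₁ | linear_combination s₁*hd₁ | linear_combination (s₁-1)*hd₁ | linear_combination (1-s₁)*hd₁ | linear_combination hd₂ | linear_combination s₂*hd₂ | linear_combination (s₂-1)*hd₂ | linear_combination (1-s₂)*hd₂
    · push_cast; field_simp; try first | ring1 | linear_combination hd₁ | linear_combination s₁*hd₁ | linear_combination (s₁-1)*hd₁ | linear_combination (1-s₁)*hd₁ | linear_combination hd₂ | linear_combination s₂*hd₂ | linear_combination (s₂-1)*hd₂ | linear_combination (1-s₂)*hd₂
    · push_cast; field_simp; try first | ring1 | linear_combination hd₁ | linear_combination s₁*hd₁ | linear_combination (s₁-1)*hd₁ | linear_combination (1-s₁)*hd₁ | linear_combination hd₂ | linear_combination s₂*hd₂ | linear_combination (s₂-1)*hd₂ | linear_combination (1-s₂)*hd₂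
  calc σ₁⁻¹ * ((!![1, b₁; p*u, sbar₁*(q*v)]).map ⇑(Int.castRingHom ℝ) *
        H.map ⇑(Int.castRingHom ℝ) * (!![sbar₂*(q*u), -b₂; -(p*v), 1]).map ⇑(Int.castRingHom ℝ)) * σ₂
      = (σ₁⁻¹ * (!![1, b₁; p*u, sbar₁*(q*v)]).map ⇑(Int.castRingHom ℝ)) *
        H.map ⇑(Int.castRingHom ℝ) *
        ((!![sbar₂*(q*u), -b₂; -(p*v), 1]).map ⇑(Int.castRingHom ℝ) * σ₂) := by
        simp only [mul_assoc]
    _ = !![s₁⁻¹, 0; 0, s₁] * !![(H 0 0 : ℝ), (H 0 1 : ℝ); (H 1 0 : ℝ), (H 1 1 : ℝ)] *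
        !![s₂, 0; 0, s₂⁻¹] := by
        rw [e1, e2, show H.map ⇑(Int.castRingHom ℝ) =
          !![(H 0 0 : ℝ), (H 0 1 : ℝ); (H 1 0 : ℝ), (H 1 1 : ℝ)] from by
            conv_lhs => rw [Matrix.eta_fin_two H]
            exact map_fin_two' _ _ _ _ _]
    _ = _ := by
        rw [Matrix.mul_fin_two, Matrix.mul_fin_two]
        refine fin_two_ext' ?_ ?_ ?_ ?_
        · field_simp; simp only [eq_intCast]; try ring
        · field_simp; simp only [eq_intCast]; try ring
        · field_simp; simp only [eq_intCast]; try ring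
        · field_simp; simp only [eq_intCast]; try ring


private lemma eq_of_sq' {x y : ℝ} (hx : 0 ≤ x) (hy : 0 ≤ y) (h : x * x = y * y) : x = y := by
  nlinarith [sq_nonneg (x - y), sq_nonneg (x + y)]

private lemma key_aux (p q u v : ℤ) (hp : 0 < p) (hq : 0 < q) (hu : 0 < u) (hv : 0 < v)
    (sbar₁ sbar₂ b₁ b₂ : ℤ)
    (h₁ : sbar₁ * (q * v) - 1 = (p * u) * b₁)
    (h₂ : sbar₂ * (q * u) - 1 = (p * v) * b₂)
    (σ₁ σ₂ : Matrix (Fin 2) (Fin 2) ℝ)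
    (hσ₁ : σ₁ = !![(1 : ℝ), (b₁ : ℝ); ((p * u : ℤ) : ℝ), ((sbar₁ * (q * v) : ℤ) : ℝ)] *
      !![Real.sqrt ((q * v : ℤ) : ℝ), 0; 0, (Real.sqrt ((q * v : ℤ) : ℝ))⁻¹])
    (hσ₂ : σ₂ = !![(1 : ℝ), (b₂ : ℝ); ((p * v : ℤ) : ℝ), ((sbar₂ * (q * u) : ℤ) : ℝ)] *
      !![Real.sqrt ((q * u : ℤ) : ℝ), 0; 0, (Real.sqrt ((q * u : ℤ) : ℝ))⁻¹])
    (c : ℤ) (hc : 0 < c) (hcpq : (p * q) ∣ c)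
    (M : Matrix (Fin 2) (Fin 2) ℝ) :
    ((∃ g : Matrix (Fin 2) (Fin 2) ℤ, g.det = 1 ∧ (p * q * u * v) ∣ g 1 0 ∧
        M = σ₁⁻¹ * g.map (Int.cast : ℤ → ℝ) * σ₂) ∧
      M 1 0 = (c : ℝ) * Real.sqrt ((u * v : ℤ) : ℝ)) ↔
    (∃ x w e : ℤ, x * w * (u * v) - c * e = 1 ∧
      M = !![(x : ℝ) * Real.sqrt ((u * v : ℤ) : ℝ), (e : ℝ) / Real.sqrt ((u * v : ℤ) : ℝ);
            (c : ℝ) * Real.sqrt ((u * v : ℤ) : ℝ), (w : ℝ) * Real.sqrt ((u * v : ℤ) : ℝ)]) := by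
  set rt := Real.sqrt ((u * v : ℤ) : ℝ) with hrt
  set s₁ := Real.sqrt ((q * v : ℤ) : ℝ) with hs₁
  set s₂ := Real.sqrt ((q * u : ℤ) : ℝ) with hs₂
  have hrtpos : 0 < rt := Real.sqrt_pos.2 (by push_cast; positivity)
  have hs₁pos : 0 < s₁ := Real.sqrt_pos.2 (by push_cast; positivity)
  have hs₂pos : 0 < s₂ := Real.sqrt_pos.2 (by push_cast; positivity)
  have hrtne : rt ≠ 0 := ne_of_gt hrtpos
  have hs₁ne : s₁ ≠ 0 := ne_of_gt hs₁pos
  have hs₂ne : s₂ ≠ 0 := ne_of_gt hs₂pos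
  have hq0 : (q : ℝ) ≠ 0 := by positivity
  have hc0 : (c : ℝ) ≠ 0 := by positivity
  have hrt2 : rt * rt = (u : ℝ) * (v : ℝ) := by
    rw [hrt, Real.mul_self_sqrt (by push_cast; positivity)]; push_cast; ring
  have hs₁2 : s₁ * s₁ = (q : ℝ) * (v : ℝ) := by
    rw [hs₁, Real.mul_self_sqrt (by push_cast; positivity)]; push_cast; ring
  have hs₂2 : s₂ * s₂ = (q : ℝ) * (u : ℝ) := by
    rw [hs₂, Real.mul_self_sqrt (by push_cast; positivity)]; push_cast; ring
  have id1 : s₁ * s₂ = (q : ℝ) * rt := by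
    refine eq_of_sq' (by positivity) (by positivity) ?_
    linear_combination (s₂*s₂) * hs₁2 + ((q:ℝ)*(v:ℝ)) * hs₂2 - ((q:ℝ)*(q:ℝ)) * hrt2
  have id2 : s₁ * rt = (v : ℝ) * s₂ := by
    refine eq_of_sq' (by positivity) (by positivity) ?_
    linear_combination (rt*rt) * hs₁2 + ((q:ℝ)*(v:ℝ)) * hrt2 - ((v:ℝ)*(v:ℝ)) * hs₂2
  have id3 : s₂ * rt = (u : ℝ) * s₁ := by
    refine eq_of_sq' (by positivity) (by positivity) ?_
    linear_combination (rt*rt) * hs₂2 + ((q:ℝ)*(u:ℝ)) * hrt2 - ((u:ℝ)*(u:ℝ)) * hs₁2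
  constructor
  · rintro ⟨⟨g, hgdet, hgdvd, hgM⟩, hM10⟩
    obtain ⟨a, b, cc, d, hg⟩ : ∃ a b cc d, g = !![a, b; cc, d] :=
      ⟨_, _, _, _, Matrix.eta_fin_two g⟩
    rw [hg] at hgdet hgdvd hgM
    rw [Matrix.det_fin_two_of] at hgdet
    have hdvdcc : (p * q * u * v) ∣ cc := by simpa using hgdvd
    obtain ⟨m, hm⟩ := hdvdcc
    -- the conjugated matrix
    have hH : !![sbar₁*(q*v), -b₁; -(p*u), 1] * !![a, b; cc, d] * !![1, b₂; p*v, sbar₂*(q*u)] =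
        !![sbar₁*(q*v)*a - b₁*cc + (sbar₁*(q*v)*b - b₁*d)*(p*v),
           (sbar₁*(q*v)*a - b₁*cc)*b₂ + (sbar₁*(q*v)*b - b₁*d)*(sbar₂*(q*u));
           cc - p*u*a + (d - p*u*b)*(p*v),
           (cc - p*u*a)*b₂ + (d - p*u*b)*(sbar₂*(q*u))] := by
      rw [Matrix.mul_fin_two, Matrix.mul_fin_two]
      refine fin_two_ext' (by ring) (by ring) (by ring) (by ring)
    have hgeq : !![1, b₁; p*u, sbar₁*(q*v)] *
        (!![sbar₁*(q*v), -b₁; -(p*u), 1] * !![a, b; cc, d] * !![1, b₂; p*v, sbar₂*(q*u)]) *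
        !![sbar₂*(q*u), -b₂; -(p*v), 1] = !![a, b; cc, d] := by
      have hAB : !![(1:ℤ), b₁; p*u, sbar₁*(q*v)] * !![sbar₁*(q*v), -b₁; -(p*u), 1] = 1 := by
        rw [Matrix.mul_fin_two, Matrix.one_fin_two]
        exact fin_two_ext' (by linear_combination h₁) (by ring) (by ring)
          (by linear_combination h₁)
      have hBA : !![(1:ℤ), b₂; p*v, sbar₂*(q*u)] * !![sbar₂*(q*u), -b₂; -(p*v), 1] = 1 := by
        rw [Matrix.mul_fin_two, Matrix.one_fin_two]
        exact fin_two_ext' (by linear_combination h₂) (by ring) (by ring)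
          (by linear_combination h₂)
      calc !![1, b₁; p*u, sbar₁*(q*v)] *
          (!![sbar₁*(q*v), -b₁; -(p*u), 1] * !![a, b; cc, d] * !![1, b₂; p*v, sbar₂*(q*u)]) *
          !![sbar₂*(q*u), -b₂; -(p*v), 1]
          = (!![1, b₁; p*u, sbar₁*(q*v)] * !![sbar₁*(q*v), -b₁; -(p*u), 1]) *
            !![a, b; cc, d] *
            (!![1, b₂; p*v, sbar₂*(q*u)] * !![sbar₂*(q*u), -b₂; -(p*v), 1]) := by
            simp only [Matrix.mul_assoc]
        _ = !![a, b; cc, d] := by rw [hAB, hBA, Matrix.one_mul, Matrix.mul_one]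
    have hMt := conj_aux p q u v hq hu hv sbar₁ sbar₂ b₁ b₂ h₁ h₂ σ₁ σ₂ hσ₁ hσ₂
      (!![sbar₁*(q*v), -b₁; -(p*u), 1] * !![a, b; cc, d] * !![1, b₂; p*v, sbar₂*(q*u)])
    rw [hgeq] at hMt
    rw [hH] at hMt
    simp only [Fin.isValue, Matrix.of_apply, Matrix.cons_val', Matrix.cons_val_zero, Matrix.empty_val', Matrix.cons_val_fin_one, Matrix.cons_val_one, Matrix.head_cons, Matrix.head_fin_const] at hMt
    have hM : M = !![((sbar₁*(q*v)*a - b₁*cc + (sbar₁*(q*v)*b - b₁*d)*(p*v) : ℤ) : ℝ) * s₂ / s₁,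
        (((sbar₁*(q*v)*a - b₁*cc)*b₂ + (sbar₁*(q*v)*b - b₁*d)*(sbar₂*(q*u)) : ℤ) : ℝ) / (s₁ * s₂);
        ((cc - p*u*a + (d - p*u*b)*(p*v) : ℤ) : ℝ) * (s₁ * s₂),
        (((cc - p*u*a)*b₂ + (d - p*u*b)*(sbar₂*(q*u)) : ℤ) : ℝ) * s₁ / s₂] := hgM.trans hMt
    -- lower-left entry
    have hE10 : ((cc - p*u*a + (d - p*u*b)*(p*v) : ℤ) : ℝ) * (s₁ * s₂) = (c : ℝ) * rt := by
      rw [hM] at hM10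
      simpa using hM10
    have hE10q : (cc - p*u*a + (d - p*u*b)*(p*v)) * q = c := by
      have hE10' := hE10
      push_cast at hE10'
      have h3 : (((cc - p*u*a + (d - p*u*b)*(p*v)) * q : ℤ) : ℝ) * rt = ((c : ℤ) : ℝ) * rt := by
        push_cast
        linear_combination hE10' - ((cc : ℝ) - (p:ℝ)*(u:ℝ)*(a:ℝ) + ((d:ℝ) - (p:ℝ)*(u:ℝ)*(b:ℝ))*((p:ℝ)*(v:ℝ))) * id1
      exact_mod_cast mul_right_cancel₀ hrtne h3
    -- divisibilities and quotients
    have hx : sbar₁*(q*v)*a - b₁*cc + (sbar₁*(q*v)*b - b₁*d)*(p*v) =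
        v * (sbar₁*q*a - b₁*(p*q*u*m) + sbar₁*q*b*(p*v) - b₁*d*p) := by
      rw [hm]; ring
    have hw : (cc - p*u*a)*b₂ + (d - p*u*b)*(sbar₂*(q*u)) =
        u * (p*q*v*m*b₂ - p*a*b₂ + (d - p*u*b)*sbar₂*q) := by
      rw [hm]; ring
    have he : (sbar₁*(q*v)*a - b₁*cc)*b₂ + (sbar₁*(q*v)*b - b₁*d)*(sbar₂*(q*u)) =
        q * (sbar₁*v*a*b₂ - b₁*(p*u*v*m)*b₂ + (sbar₁*(q*v)*b - b₁*d)*sbar₂*u) := by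
      rw [hm]; ring
    -- determinant of the conjugated matrix
    have hdetE : (sbar₁*(q*v)*a - b₁*cc + (sbar₁*(q*v)*b - b₁*d)*(p*v)) *
          ((cc - p*u*a)*b₂ + (d - p*u*b)*(sbar₂*(q*u))) -
        ((sbar₁*(q*v)*a - b₁*cc)*b₂ + (sbar₁*(q*v)*b - b₁*d)*(sbar₂*(q*u))) *
          (cc - p*u*a + (d - p*u*b)*(p*v)) = 1 := by
      have hD : (!![sbar₁*(q*v), -b₁; -(p*u), 1] * !![a, b; cc, d] *
          !![1, b₂; p*v, sbar₂*(q*u)]).det =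
          (sbar₁*(q*v)*1 - (-b₁)*(-(p*u))) * (a*d - b*cc) * (1*(sbar₂*(q*u)) - b₂*(p*v)) := by
        rw [Matrix.det_mul, Matrix.det_mul, Matrix.det_fin_two_of, Matrix.det_fin_two_of,
          Matrix.det_fin_two_of]
      rw [hH, Matrix.det_fin_two_of] at hD
      rw [hD]
      linear_combination ((a*d - b*cc) * (1*(sbar₂*(q*u)) - b₂*(p*v))) * h₁ +
        (1*(sbar₂*(q*u)) - b₂*(p*v)) * hgdet + h₂
    refine ⟨sbar₁*q*a - b₁*(p*q*u*m) + sbar₁*q*b*(p*v) - b₁*d*p,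
      p*q*v*m*b₂ - p*a*b₂ + (d - p*u*b)*sbar₂*q,
      sbar₁*v*a*b₂ - b₁*(p*u*v*m)*b₂ + (sbar₁*(q*v)*b - b₁*d)*sbar₂*u, ?_, ?_⟩
    · -- the relation
      rw [hx, hw, he] at hdetE
      linear_combination hdetE + (sbar₁*v*a*b₂ - b₁*(p*u*v*m)*b₂ +
        (sbar₁*(q*v)*b - b₁*d)*sbar₂*u) * hE10q
    · -- the matrix form
      rw [hM]
      refine fin_two_ext' ?_ ?_ ?_ ?_
      · rw [hx, div_eq_iff hs₁ne]; push_cast; linear_combination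
          (-((sbar₁:ℝ)*q*a - b₁*(p*q*u*m) + sbar₁*q*b*(p*v) - b₁*d*p)) * id2
      · rw [he, div_eq_div_iff (by positivity) hrtne]; push_cast; linear_combination
          (-((sbar₁:ℝ)*v*a*b₂ - b₁*(p*u*v*m)*b₂ + ((sbar₁:ℝ)*((q:ℝ)*v)*b - b₁*d)*sbar₂*u)) * id1
      · exact hE10
      · rw [hw, div_eq_iff hs₂ne]; push_cast; linear_combination
          (-((p:ℝ)*q*v*m*b₂ - p*a*b₂ + ((d:ℝ) - (p:ℝ)*u*b)*sbar₂*q)) * id3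
  · rintro ⟨x, w, e, hrel, hMform⟩
    obtain ⟨k, hk⟩ := hcpq
    constructor
    · refine ⟨!![1, b₁; p*u, sbar₁*(q*v)] * !![x*v, q*e; p*k, w*u] *
        !![sbar₂*(q*u), -b₂; -(p*v), 1], ?_, ?_, ?_⟩
      · rw [Matrix.det_mul, Matrix.det_mul, Matrix.det_fin_two_of, Matrix.det_fin_two_of,
          Matrix.det_fin_two_of]
        have dA : 1*(sbar₁*(q*v)) - b₁*(p*u) = 1 := by linear_combination h₁
        have dB : (sbar₂*(q*u))*1 - (-b₂)*(-(p*v)) = 1 := by linear_combination h₂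
        have dH : x*v*(w*u) - q*e*(p*k) = 1 := by linear_combination hrel + e*hk
        linear_combination ((x*v*(w*u) - q*e*(p*k)) * ((sbar₂*(q*u))*1 - (-b₂)*(-(p*v)))) * dA +
          ((sbar₂*(q*u))*1 - (-b₂)*(-(p*v))) * dH + dB
      · have hgl : !![1, b₁; p*u, sbar₁*(q*v)] * !![x*v, q*e; p*k, w*u] *
            !![sbar₂*(q*u), -b₂; -(p*v), 1] =
            !![(x*v + b₁*(p*k))*(sbar₂*(q*u)) - (q*e + b₁*(w*u))*(p*v),
               -(x*v + b₁*(p*k))*b₂ + (q*e + b₁*(w*u));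
               (p*u*(x*v) + sbar₁*(q*v)*(p*k))*(sbar₂*(q*u)) - (p*u*(q*e) + sbar₁*(q*v)*(w*u))*(p*v),
               -(p*u*(x*v) + sbar₁*(q*v)*(p*k))*b₂ + (p*u*(q*e) + sbar₁*(q*v)*(w*u))] := by
          rw [Matrix.mul_fin_two, Matrix.mul_fin_two]
          exact fin_two_ext' (by ring) (by ring) (by ring) (by ring)
        rw [hgl]
        refine ⟨u*x*sbar₂ + sbar₁*k*sbar₂*q - e*p - sbar₁*w*v, ?_⟩
        simp only [Fin.isValue, Matrix.of_apply, Matrix.cons_val', Matrix.cons_val_zero, Matrix.empty_val', Matrix.cons_val_fin_one, Matrix.cons_val_one, Matrix.head_cons, Matrix.head_fin_const]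
        ring
      · rw [hMform, conj_aux p q u v hq hu hv sbar₁ sbar₂ b₁ b₂ h₁ h₂ σ₁ σ₂ hσ₁ hσ₂
          !![x*v, q*e; p*k, w*u]]
        simp only [Fin.isValue, Matrix.of_apply, Matrix.cons_val', Matrix.cons_val_zero, Matrix.empty_val', Matrix.cons_val_fin_one, Matrix.cons_val_one, Matrix.head_cons, Matrix.head_fin_const]
        have hkc : ((p:ℝ)*(k:ℝ)) * (q:ℝ) = (c:ℝ) := by
          have hcast : ((c:ℤ):ℝ) = ((p*q*k : ℤ) : ℝ) := by
            exact_mod_cast congrArg (Int.cast : ℤ → ℝ) hk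
          push_cast at hcast; linear_combination -hcast
        simp only [← hs₁, ← hs₂, ← hrt]
        refine (fin_two_ext' ?_ ?_ ?_ ?_).symm
        · rw [div_eq_iff hs₁ne]; push_cast; linear_combination (-(x:ℝ)) * id2
        · rw [div_eq_div_iff (by positivity) hrtne]; push_cast; linear_combination (-(e:ℝ)) * id1
        · push_cast; linear_combination ((p:ℝ)*(k:ℝ)) * id1 + rt * hkc
        · rw [div_eq_iff hs₂ne]; push_cast; linear_combination (-(w:ℝ)) * id3
    · rw [hMform]
      simp only [Fin.isValue, Matrix.of_apply, Matrix.cons_val', Matrix.cons_val_zero, Matrix.empty_val', Matrix.cons_val_fin_one, Matrix.cons_val_one, Matrix.head_cons, Matrix.head_fin_const]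

private lemma entry01 (c x w u v e : ℤ) (rt : ℝ) (hrtne : rt ≠ 0) (hc0 : (c:ℝ) ≠ 0)
    (hrel : x * w * (u * v) - c * e = 1) :
    (e : ℝ) / rt = (((x * w * u * v : ℤ) : ℝ) - 1) / ((c : ℝ) * rt) := by
  rw [div_eq_div_iff hrtne (mul_ne_zero hc0 hrtne)]
  have h : ((x * w * (u * v) - c * e : ℤ) : ℝ) = ((1 : ℤ) : ℝ) := by
    exact_mod_cast congrArg (Int.cast : ℤ → ℝ) hrel
  push_cast at h ⊢
  linear_combination -rt * h


/-- **Double coset representatives with given lower-left entry** (Equation (2.13) of the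
paper): the elements of `σ_{1/r₁}⁻¹ Γ₀(N) σ_{1/r₂}` with lower-left entry `γ₀ = c√(uv)`
and upper-left and lower-right entries in `[0, γ₀)` are exactly the matrices
`!![x√(uv), *; c√(uv), w√(uv)]` with `0 ≤ x, w < c` and `xwuv ≡ 1 (mod c)`, and these form
a complete set of representatives of `Γ∞\{M : M₂₁ = γ₀}/Γ∞`. -/
theorem stmt_3 (p q u v : ℤ) (hp : 0 < p) (hq : 0 < q) (hu : 0 < u) (hv : 0 < v)
    (hpq : IsCoprime p q) (hpu : IsCoprime p u) (hpv : IsCoprime p v)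
    (hqu : IsCoprime q u) (hqv : IsCoprime q v) (huv : IsCoprime u v)
    (sbar₁ sbar₂ b₁ b₂ : ℤ)
    (h₁ : sbar₁ * (q * v) - 1 = (p * u) * b₁)
    (h₂ : sbar₂ * (q * u) - 1 = (p * v) * b₂)
    (σ₁ σ₂ : Matrix (Fin 2) (Fin 2) ℝ)
    (hσ₁ : σ₁ = !![(1 : ℝ), (b₁ : ℝ); ((p * u : ℤ) : ℝ), ((sbar₁ * (q * v) : ℤ) : ℝ)] *
      !![Real.sqrt ((q * v : ℤ) : ℝ), 0; 0, (Real.sqrt ((q * v : ℤ) : ℝ))⁻¹])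
    (hσ₂ : σ₂ = !![(1 : ℝ), (b₂ : ℝ); ((p * v : ℤ) : ℝ), ((sbar₂ * (q * u) : ℤ) : ℝ)] *
      !![Real.sqrt ((q * u : ℤ) : ℝ), 0; 0, (Real.sqrt ((q * u : ℤ) : ℝ))⁻¹])
    (c : ℤ) (hc : 0 < c) (hcpq : (p * q) ∣ c) (hcuv : IsCoprime c (u * v))
    (γ₀ : ℝ) (hγ₀ : γ₀ = (c : ℝ) * Real.sqrt ((u * v : ℤ) : ℝ))
    (coset : Set (Matrix (Fin 2) (Fin 2) ℝ))
    (hcoset : coset = {M | ∃ g : Matrix (Fin 2) (Fin 2) ℤ, g.det = 1 ∧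
      (p * q * u * v) ∣ g 1 0 ∧ M = σ₁⁻¹ * g.map (Int.cast : ℤ → ℝ) * σ₂})
    (D : Set (Matrix (Fin 2) (Fin 2) ℝ))
    (hD : D = {M ∈ coset | M 1 0 = γ₀ ∧ M 0 0 ∈ Set.Ico 0 γ₀ ∧ M 1 1 ∈ Set.Ico 0 γ₀}) :
    D = {M | ∃ x w : ℤ, 0 ≤ x ∧ x < c ∧ 0 ≤ w ∧ w < c ∧ x * w * u * v ≡ 1 [ZMOD c] ∧
        M = !![(x : ℝ) * Real.sqrt ((u * v : ℤ) : ℝ),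
                (((x * w * u * v : ℤ) : ℝ) - 1) / ((c : ℝ) * Real.sqrt ((u * v : ℤ) : ℝ));
              (c : ℝ) * Real.sqrt ((u * v : ℤ) : ℝ),
                (w : ℝ) * Real.sqrt ((u * v : ℤ) : ℝ)]} ∧
      ∀ M' ∈ coset, M' 1 0 = γ₀ →
        ∃! t : ℤ × ℤ × Matrix (Fin 2) (Fin 2) ℝ, t.2.2 ∈ D ∧
          M' = (!![(1 : ℝ), (t.1 : ℝ); 0, 1])⁻¹ * t.2.2 * (!![(1 : ℝ), (t.2.1 : ℝ); 0, 1])⁻¹ := by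
  set rt := Real.sqrt ((u * v : ℤ) : ℝ) with hrt
  have hrtpos : 0 < rt := Real.sqrt_pos.2 (by push_cast; positivity)
  have hrtne : rt ≠ 0 := ne_of_gt hrtpos
  have hrt2 : rt * rt = (u : ℝ) * (v : ℝ) := by
    rw [hrt, Real.mul_self_sqrt (by push_cast; positivity)]; push_cast; ring
  have hc0 : (c : ℝ) ≠ 0 := by positivity
  have key := key_aux p q u v hp hq hu hv sbar₁ sbar₂ b₁ b₂ h₁ h₂ σ₁ σ₂ hσ₁ hσ₂ c hc hcpq
  have hmem : ∀ M : Matrix (Fin 2) (Fin 2) ℝ, M ∈ coset ↔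
      ∃ g : Matrix (Fin 2) (Fin 2) ℤ, g.det = 1 ∧ (p * q * u * v) ∣ g 1 0 ∧
        M = σ₁⁻¹ * g.map (Int.cast : ℤ → ℝ) * σ₂ := by
    intro M; rw [hcoset]; exact Iff.rfl
  -- the characterization of D
  have hDchar : ∀ M : Matrix (Fin 2) (Fin 2) ℝ, M ∈ D ↔
      (∃ x w : ℤ, 0 ≤ x ∧ x < c ∧ 0 ≤ w ∧ w < c ∧ x * w * u * v ≡ 1 [ZMOD c] ∧
        M = !![(x : ℝ) * rt, (((x * w * u * v : ℤ) : ℝ) - 1) / ((c : ℝ) * rt);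
              (c : ℝ) * rt, (w : ℝ) * rt]) := by
    intro M
    rw [hD]
    simp only [Set.mem_setOf_eq, Set.mem_sep_iff, Set.mem_Ico]
    constructor
    · rintro ⟨hMc, hM10, hM00, hM11⟩
      obtain ⟨x, w, e, hrel, hMf⟩ := (key M).1 ⟨(hmem M).1 hMc, by rw [hγ₀] at hM10; exact hM10⟩
      rw [← hrt] at hMf
      have hM00' : M 0 0 = (x : ℝ) * rt := by
        rw [hMf]
        simp only [Fin.isValue, Matrix.of_apply, Matrix.cons_val', Matrix.cons_val_zero,
          Matrix.empty_val', Matrix.cons_val_fin_one, Matrix.cons_val_one, Matrix.head_cons,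
          Matrix.head_fin_const]
      have hM11' : M 1 1 = (w : ℝ) * rt := by
        rw [hMf]
        simp only [Fin.isValue, Matrix.of_apply, Matrix.cons_val', Matrix.cons_val_zero,
          Matrix.empty_val', Matrix.cons_val_fin_one, Matrix.cons_val_one, Matrix.head_cons,
          Matrix.head_fin_const]
      rw [hM00', hγ₀] at hM00
      rw [hM11', hγ₀] at hM11
      refine ⟨x, w, ?_, ?_, ?_, ?_, ?_, ?_⟩
      · exact_mod_cast (mul_nonneg_iff_of_pos_right hrtpos).1 hM00.1
      · exact_mod_cast (mul_lt_mul_iff_of_pos_right hrtpos).1 hM00.2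
      · exact_mod_cast (mul_nonneg_iff_of_pos_right hrtpos).1 hM11.1
      · exact_mod_cast (mul_lt_mul_iff_of_pos_right hrtpos).1 hM11.2
      · exact Int.ModEq.symm (Int.modEq_iff_dvd.2 ⟨e, by linear_combination hrel⟩)
      · rw [hMf]
        exact fin_two_ext' rfl (entry01 c x w u v e rt hrtne hc0 hrel) rfl rfl
    · rintro ⟨x, w, hx0, hxc, hw0, hwc, hmod, hMf⟩
      obtain ⟨ee, hee⟩ := Int.modEq_iff_dvd.1 hmod.symm
      have hrel : x * w * (u * v) - c * ee = 1 := by linear_combination hee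
      have hMf' : M = !![(x : ℝ) * rt, ((ee : ℤ) : ℝ) / rt; (c : ℝ) * rt, (w : ℝ) * rt] := by
        rw [hMf]
        exact fin_two_ext' rfl (entry01 c x w u v ee rt hrtne hc0 hrel).symm rfl rfl
      rw [hrt] at hMf'
      obtain ⟨hMc, hM10⟩ := (key M).2 ⟨x, w, ee, hrel, hMf'⟩
      refine ⟨(hmem M).2 hMc, by rw [hγ₀]; exact hM10, ?_, ?_⟩
      · rw [hγ₀, hMf]
        simp only [Fin.isValue, Matrix.of_apply, Matrix.cons_val', Matrix.cons_val_zero,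
          Matrix.empty_val', Matrix.cons_val_fin_one, Matrix.cons_val_one, Matrix.head_cons,
          Matrix.head_fin_const]
        constructor
        · positivity
        · have : (x : ℝ) < (c : ℝ) := by exact_mod_cast hxc
          exact (mul_lt_mul_iff_of_pos_right hrtpos).2 this
      · rw [hγ₀, hMf]
        simp only [Fin.isValue, Matrix.of_apply, Matrix.cons_val', Matrix.cons_val_zero,
          Matrix.empty_val', Matrix.cons_val_fin_one, Matrix.cons_val_one, Matrix.head_cons,
          Matrix.head_fin_const]
        constructor
        · positivity
        · have : (w : ℝ) < (c : ℝ) := by exact_mod_cast hwc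
          exact (mul_lt_mul_iff_of_pos_right hrtpos).2 this
  constructor
  · ext M
    rw [hDchar M]
    exact Iff.rfl
  · -- complete set of representatives
    intro M' hM'c hM'10
    obtain ⟨x', w', e', hrel', hM'f⟩ := (key M').1 ⟨(hmem M').1 hM'c, by rw [← hγ₀]; exact hM'10⟩
    rw [← hrt] at hM'f
    have ninv : ∀ r : ℝ, (!![(1 : ℝ), r; 0, 1])⁻¹ = !![1, -r; 0, 1] := by
      intro r
      apply Matrix.inv_eq_left_inv
      rw [Matrix.mul_fin_two, Matrix.one_fin_two]
      exact fin_two_ext' (by ring) (by ring) (by ring) (by ring)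
    set j : ℤ := -(x' / c) with hj
    set k : ℤ := -(w' / c) with hk
    set x : ℤ := x' % c with hx
    set w : ℤ := w' % c with hw
    have hxe : x = x' + c * j := by rw [hx, hj, Int.emod_def]; ring
    have hwe : w = w' + c * k := by rw [hw, hk, Int.emod_def]; ring
    have hx0 : 0 ≤ x := Int.emod_nonneg x' (ne_of_gt hc)
    have hxc : x < c := Int.emod_lt_of_pos x' hc
    have hw0 : 0 ≤ w := Int.emod_nonneg w' (ne_of_gt hc)
    have hwc : w < c := Int.emod_lt_of_pos w' hc
    set e : ℤ := e' + (k * x + j * w') * (u * v) with he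
    have hrel : x * w * (u * v) - c * e = 1 := by
      rw [hxe, hwe, he, hxe]; linear_combination hrel'
    set M : Matrix (Fin 2) (Fin 2) ℝ :=
      !![(x : ℝ) * rt, (e : ℝ) / rt; (c : ℝ) * rt, (w : ℝ) * rt] with hM
    have hMD : M ∈ D := by
      rw [hDchar M]
      refine ⟨x, w, hx0, hxc, hw0, hwc,
        (Int.modEq_iff_dvd.2 ⟨e, by linear_combination hrel⟩).symm, ?_⟩
      rw [hM]
      exact fin_two_ext' rfl (entry01 c x w u v e rt hrtne hc0 hrel) rfl rfl
    -- cast versions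
    have hxeR : (x : ℝ) = (x' : ℝ) + (c : ℝ) * (j : ℝ) := by exact_mod_cast hxe
    have hweR : (w : ℝ) = (w' : ℝ) + (c : ℝ) * (k : ℝ) := by exact_mod_cast hwe
    have heR : (e : ℝ) = (e' : ℝ) + ((k : ℝ) * (x : ℝ) + (j : ℝ) * (w' : ℝ)) * ((u : ℝ) * (v : ℝ)) := by
      exact_mod_cast congrArg (Int.cast : ℤ → ℝ) he
    refine ⟨(j, k, M), ⟨hMD, ?_⟩, ?_⟩
    · -- M' = n(j)⁻¹ M n(k)⁻¹
      show M' = (!![(1 : ℝ), (j : ℝ); 0, 1])⁻¹ * M * (!![(1 : ℝ), (k : ℝ); 0, 1])⁻¹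
      rw [ninv, ninv, hM, hM'f, Matrix.mul_fin_two, Matrix.mul_fin_two]
      refine fin_two_ext' ?_ ?_ ?_ ?_
      · linear_combination -rt * hxeR
      · rw [div_eq_iff hrtne]
        have hcanc : ((e:ℝ)/rt)*rt = (e:ℝ) := div_mul_cancel₀ _ hrtne
        linear_combination -hcanc - heR +
          ((k:ℝ)*(x:ℝ) - (k:ℝ)*(j:ℝ)*(c:ℝ) + (j:ℝ)*(w:ℝ)) * hrt2 +
          (j:ℝ)*((u:ℝ)*(v:ℝ)) * hweR
      · ring
      · linear_combination -rt * hweR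
    · -- uniqueness
      rintro ⟨j₂, k₂, M₂⟩ ⟨hM₂D, hM₂eq⟩
      obtain ⟨x₂, w₂, hx₂0, hx₂c, hw₂0, hw₂c, hmod₂, hM₂f⟩ := (hDchar M₂).1 hM₂D
      have hM₂eq' : M' = !![1, -(j₂ : ℝ); 0, 1] *
          !![(x₂ : ℝ) * rt, (((x₂ * w₂ * u * v : ℤ) : ℝ) - 1) / ((c : ℝ) * rt);
             (c : ℝ) * rt, (w₂ : ℝ) * rt] * !![1, -(k₂ : ℝ); 0, 1] := by
        rw [hM₂eq]; simp only [Fin.isValue]; rw [ninv, ninv, hM₂f]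
      rw [hM'f, Matrix.mul_fin_two, Matrix.mul_fin_two] at hM₂eq'
      have h00 := congrFun (congrFun hM₂eq' 0) 0
      have h11 := congrFun (congrFun hM₂eq' 1) 1
      simp only [Fin.isValue, Matrix.of_apply, Matrix.cons_val', Matrix.cons_val_zero,
        Matrix.empty_val', Matrix.cons_val_fin_one, Matrix.cons_val_one, Matrix.head_cons,
        Matrix.head_fin_const] at h00 h11
      -- x' = x₂ - j₂ c,  w' = w₂ - k₂ c
      have hx'R : (x' : ℝ) = (x₂ : ℝ) - (j₂ : ℝ) * (c : ℝ) := by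
        have h := mul_right_cancel₀ hrtne (show (x' : ℝ) * rt =
          ((x₂ : ℝ) - (j₂ : ℝ) * (c : ℝ)) * rt by linear_combination h00)
        linarith [h]
      have hw'R : (w' : ℝ) = (w₂ : ℝ) - (k₂ : ℝ) * (c : ℝ) := by
        have h := mul_right_cancel₀ hrtne (show (w' : ℝ) * rt =
          ((w₂ : ℝ) - (k₂ : ℝ) * (c : ℝ)) * rt by linear_combination h11)
        linarith [h]
      have hx'I : x' = x₂ - j₂ * c := by exact_mod_cast hx'R
      have hw'I : w' = w₂ - k₂ * c := by exact_mod_cast hw'R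
      have hxx : x₂ - x = c * (j₂ - (-(x' / c))) := by
        rw [hx, Int.emod_def]; linear_combination -hx'I
      have hx₂x : x₂ = x ∧ j₂ = j := by
        have hdvd : c ∣ x₂ - x := ⟨j₂ - (-(x' / c)), hxx⟩
        have h0 : x₂ - x = 0 := Int.eq_zero_of_abs_lt_dvd hdvd (abs_lt.2 ⟨by omega, by omega⟩)
        have hj₂ : c * (j₂ - (-(x' / c))) = 0 := by rw [← hxx]; exact h0
        rcases mul_eq_zero.1 hj₂ with h | h
        · omega
        · exact ⟨by omega, by rw [hj]; linarith [h]⟩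
      have hww : w₂ - w = c * (k₂ - (-(w' / c))) := by
        rw [hw, Int.emod_def]; linear_combination -hw'I
      have hw₂w : w₂ = w ∧ k₂ = k := by
        have hdvd : c ∣ w₂ - w := ⟨k₂ - (-(w' / c)), hww⟩
        have h0 : w₂ - w = 0 := Int.eq_zero_of_abs_lt_dvd hdvd (abs_lt.2 ⟨by omega, by omega⟩)
        have hk₂ : c * (k₂ - (-(w' / c))) = 0 := by rw [← hww]; exact h0
        rcases mul_eq_zero.1 hk₂ with h | h
        · omega
        · exact ⟨by omega, by rw [hk]; linarith [h]⟩
      have hM₂M : M₂ = M := by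
        rw [hM₂f, hM, hx₂x.1, hw₂w.1]
        exact fin_two_ext' rfl (entry01 c x w u v e rt hrtne hc0 hrel).symm rfl rfl
      show (j₂, k₂, M₂) = (j, k, M)
      rw [hx₂x.2, hw₂w.2, hM₂M]
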